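/- Let p ≥ 1 and n = 2p. For any integer partition λ = (λ_1 ≥ … ≥ λ_p ≥ 0) of length p, define A_n(λ) = [∏_{i=1}^p ∏_{j=1}^p (λ_i+λ_j+n+1−i−j)/(n+1−i−j)] · [∏_{1≤i<j≤p} (λ_i−λ_j+j−i)/(j−i)]² and B_n(λ) = (2/n)·∑_{i=1}^p (λ_i² + (n+1−2i)·λ_i). Then A_n(λ) ≤ n^{B_n(λ)}. -/

import Mathlib

open Finset Real

lemma bern (c : ℝ) (hc : 1 ≤ c) (x : ℕ) : ((x : ℝ) + c) / c ≤ ((c + 1) / c) ^ x := by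
  have hc0 : 0 < c := by linarith
  have hd : (0:ℝ) < 1/c := by positivity
  have h := one_add_mul_le_pow (show (-2:ℝ) ≤ 1/c by linarith) x
  have e1 : (1 : ℝ) + 1/c = (c+1)/c := by field_simp
  have e2 : (1 : ℝ) + (x:ℝ) * (1/c) = ((x:ℝ) + c)/c := by field_simp; ring
  rw [e1, e2] at h
  exact h

lemma tele_div (f : ℕ → ℝ) : ∀ N, (∀ t, t ≤ N → f t ≠ 0) →
    ∏ t ∈ Finset.range N, (f t / f (t+1)) = f 0 / f N := by
  intro N
  induction N with
  | zero => intro h; rw [Finset.prod_range_zero, div_self (h 0 le_rfl)]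
  | succ N ih =>
    intro h
    have hN : f N ≠ 0 := h N (by omega)
    have hN1 : f (N+1) ≠ 0 := h (N+1) le_rfl
    have h0 : f 0 ≠ 0 := h 0 (by omega)
    rw [Finset.prod_range_succ, ih (fun t ht => h t (by omega))]
    field_simp

lemma tele_div' (f : ℕ → ℝ) : ∀ N, (∀ t, t ≤ N → f t ≠ 0) →
    ∏ t ∈ Finset.range N, (f (t+1) / f t) = f N / f 0 := by
  intro N
  induction N with
  | zero => intro h; rw [Finset.prod_range_zero, div_self (h 0 le_rfl)]
  | succ N ih =>
    intro h
    have hN : f N ≠ 0 := h N (by omega)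
    have hN1 : f (N+1) ≠ 0 := h (N+1) le_rfl
    have h0 : f 0 ≠ 0 := h 0 (by omega)
    rw [Finset.prod_range_succ, ih (fun t ht => h t (by omega))]
    field_simp

lemma rpow_sum' {ι : Type*} (s : Finset ι) (x : ℝ) (hx : 0 < x) (f : ι → ℝ) :
    x ^ (∑ i ∈ s, f i) = ∏ i ∈ s, x ^ (f i) := by
  classical
  induction s using Finset.induction_on with
  | empty => simp
  | insert _ _ h ih => rw [Finset.sum_insert h, Finset.prod_insert h, Real.rpow_add hx, ih]

lemma prod_Ioi_val {p : ℕ} (i : Fin p) (F : ℕ → ℝ) :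
    ∏ j ∈ Finset.Ioi i, F (j:ℕ) = ∏ t ∈ Finset.range (p - ((i:ℕ)+1)), F ((i:ℕ) + 1 + t) := by
  have h1 : ∏ j ∈ Finset.Ioi i, F (j:ℕ) = ∏ x ∈ (Finset.Ioi i).map Fin.valEmbedding, F x := by
    rw [Finset.prod_map]; rfl
  rw [h1, Fin.map_valEmbedding_Ioi]
  have h2 : Finset.Ioo (i:ℕ) p = Finset.Ico ((i:ℕ)+1) p := by
    ext m
    simp only [Finset.mem_Ioo, Finset.mem_Ico]
    have := i.isLt
    omega
  rw [h2, Finset.prod_Ico_eq_prod_range]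

lemma prod_Iio_val {p : ℕ} (i : Fin p) (F : ℕ → ℝ) :
    ∏ j ∈ Finset.Iio i, F (j:ℕ) = ∏ t ∈ Finset.range (i:ℕ), F t := by
  have h1 : ∏ j ∈ Finset.Iio i, F (j:ℕ) = ∏ x ∈ (Finset.Iio i).map Fin.valEmbedding, F x := by
    rw [Finset.prod_map]; rfl
  rw [h1, Fin.map_valEmbedding_Iio]
  congr 1
  ext m
  simp [Finset.mem_Iio, Finset.mem_range]

open Finset Real

/-- `S p m`: the key inequality `(p+m)^p ≤ (2p)^m * (p+1-m)^p`. -/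
def Sp (p m : ℕ) : Prop := ((p:ℝ) + m) ^ p ≤ (2*(p:ℝ)) ^ m * ((p:ℝ) + 1 - m) ^ p

/-- `R p m`: the ratio condition `((p+1)^2-m^2)^p ≤ 2p (p^2-m^2)^p`. -/
def Rp (p m : ℕ) : Prop :=
  (((p:ℝ)+1)^2 - (m:ℝ)^2) ^ p ≤ 2*(p:ℝ) * ((p:ℝ)^2 - (m:ℝ)^2) ^ p

/-- `Q p m`: the reverse ratio condition. -/
def Qp (p m : ℕ) : Prop :=
  2*(p:ℝ) * ((p:ℝ)^2 - (m:ℝ)^2) ^ p ≤ (((p:ℝ)+1)^2 - (m:ℝ)^2) ^ p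

lemma base1 (p : ℕ) (hp : 1 ≤ p) : Sp p 1 := by
  unfold Sp
  push_cast
  have hgoal : (2*(p:ℝ)) ^ (1:ℕ) * ((p:ℝ) + 1 - 1) ^ p = 2 * p * (p:ℝ)^p := by
    norm_num
  rw [hgoal]
  rcases eq_or_lt_of_le hp with h | h
  · rw [← h]; norm_num
  · have hp2 : 2 ≤ p := h
    have hp2R : (2:ℝ) ≤ p := by exact_mod_cast hp2
    have hp0 : (0:ℝ) < p := by linarith
    have h1 : (p:ℝ) + 1 ≤ Real.exp (1/p) * p := by
      have h0 := Real.add_one_le_exp (1/(p:ℝ))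
      have h2 : (1/(p:ℝ) + 1) * p ≤ Real.exp (1/p) * p :=
        mul_le_mul_of_nonneg_right h0 (by linarith)
      calc (p:ℝ) + 1 = (1/(p:ℝ) + 1) * p := by field_simp; ring
        _ ≤ _ := h2
    have h2 : ((p:ℝ) + 1) ^ p ≤ (Real.exp (1/p) * p) ^ p :=
      pow_le_pow_left₀ (by linarith) h1 p
    have h4 : (Real.exp (1/(p:ℝ)))^p = Real.exp 1 := by
      rw [← Real.exp_nat_mul]
      congr 1
      field_simp
    have h5 : Real.exp 1 ≤ 2 * (p:ℝ) := by
      have := Real.exp_one_lt_d9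
      linarith
    calc ((p:ℝ) + 1) ^ p ≤ (Real.exp (1/p) * p) ^ p := h2
      _ = Real.exp 1 * (p:ℝ)^p := by rw [mul_pow, h4]
      _ ≤ 2 * p * (p:ℝ)^p := by
          apply mul_le_mul_of_nonneg_right h5 (by positivity)

lemma baseP (p : ℕ) : Sp p p := by
  unfold Sp
  have : (p:ℝ) + 1 - p = 1 := by ring
  rw [this, one_pow, mul_one]
  have : (p:ℝ) + p = 2 * p := by ring
  rw [this]

lemma Rmono (p : ℕ) (m' m : ℕ) (hp : 1 ≤ p) (h' : m' ≤ m) (hm : m + 1 ≤ p) (hR : Rp p m) :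
    Rp p m' := by
  unfold Rp at *
  have hpR : (1:ℝ) ≤ p := by exact_mod_cast hp
  have hmR : (m:ℝ) + 1 ≤ p := by exact_mod_cast hm
  have hm'R : (m':ℝ) ≤ m := by exact_mod_cast h'
  have hm'0 : (0:ℝ) ≤ m' := by positivity
  have hsq : (m':ℝ)^2 ≤ (m:ℝ)^2 := by nlinarith
  have hB : (0:ℝ) < (p:ℝ)^2 - (m:ℝ)^2 := by nlinarith
  have hB' : (0:ℝ) < (p:ℝ)^2 - (m':ℝ)^2 := by nlinarith
  have hA' : (0:ℝ) ≤ ((p:ℝ)+1)^2 - (m':ℝ)^2 := by nlinarith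
  have cross : (((p:ℝ)+1)^2 - (m':ℝ)^2) * ((p:ℝ)^2 - (m:ℝ)^2)
      ≤ (((p:ℝ)+1)^2 - (m:ℝ)^2) * ((p:ℝ)^2 - (m':ℝ)^2) := by nlinarith
  have h1 : ((((p:ℝ)+1)^2 - (m':ℝ)^2) * ((p:ℝ)^2 - (m:ℝ)^2)) ^ p
      ≤ ((((p:ℝ)+1)^2 - (m:ℝ)^2) * ((p:ℝ)^2 - (m':ℝ)^2)) ^ p := by
    apply pow_le_pow_left₀ (by positivity) cross
  rw [mul_pow, mul_pow] at h1
  have h2 : (((p:ℝ)+1)^2 - (m:ℝ)^2)^p * ((p:ℝ)^2 - (m':ℝ)^2)^p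
      ≤ (2*(p:ℝ) * ((p:ℝ)^2 - (m:ℝ)^2)^p) * ((p:ℝ)^2 - (m':ℝ)^2)^p := by
    apply mul_le_mul_of_nonneg_right hR (by positivity)
  have h3 := h1.trans h2
  have hBp : (0:ℝ) < ((p:ℝ)^2 - (m:ℝ)^2)^p := pow_pos hB p
  have h4 : (((p:ℝ)+1)^2 - (m':ℝ)^2)^p * ((p:ℝ)^2 - (m:ℝ)^2)^p
      ≤ (2*(p:ℝ) * ((p:ℝ)^2 - (m':ℝ)^2)^p) * ((p:ℝ)^2 - (m:ℝ)^2)^p := by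
    calc (((p:ℝ)+1)^2 - (m':ℝ)^2)^p * ((p:ℝ)^2 - (m:ℝ)^2)^p
        ≤ (2*(p:ℝ) * ((p:ℝ)^2 - (m:ℝ)^2)^p) * ((p:ℝ)^2 - (m':ℝ)^2)^p := h3
      _ = (2*(p:ℝ) * ((p:ℝ)^2 - (m':ℝ)^2)^p) * ((p:ℝ)^2 - (m:ℝ)^2)^p := by ring
  exact le_of_mul_le_mul_right h4 hBp

lemma stepup (p m : ℕ) (h1 : 1 ≤ m) (h2 : m + 1 ≤ p) (hS : Sp p m) (hR : Rp p m) :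
    Sp p (m+1) := by
  unfold Sp Rp at *
  have hmR : (m:ℝ) + 1 ≤ p := by exact_mod_cast h2
  have hm1 : (1:ℝ) ≤ m := by exact_mod_cast h1
  push_cast
  set a := (p:ℝ)
  set μ := (m:ℝ)
  have hpos : (0:ℝ) < (a + 1 - μ) ^ p := by
    apply pow_pos; linarith
  have key : ((a + μ + 1) ^ p) * ((a + 1 - μ) ^ p)
      ≤ ((2*a)^(m+1) * (a - μ)^p) * ((a + 1 - μ) ^ p) := by
    calc (a + μ + 1) ^ p * (a + 1 - μ) ^ p
        = ((a+1)^2 - μ^2) ^ p := by rw [← mul_pow]; congr 1; ring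
      _ ≤ 2*a * (a^2 - μ^2) ^ p := hR
      _ = 2*a * ((a+μ)^p * (a-μ)^p) := by rw [show a^2 - μ^2 = (a+μ)*(a-μ) from by ring, mul_pow]
      _ ≤ 2*a * (((2*a)^m * (a+1-μ)^p) * (a-μ)^p) := by
          apply mul_le_mul_of_nonneg_left _ (by linarith)
          apply mul_le_mul_of_nonneg_right hS
          apply pow_nonneg; linarith
      _ = ((2*a)^(m+1) * (a - μ)^p) * ((a + 1 - μ) ^ p) := by rw [pow_succ]; ring
  have key2 := le_of_mul_le_mul_right key hpos
  calc (a + (μ + 1)) ^ p = (a + μ + 1) ^ p := by ring_nf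
    _ ≤ (2*a)^(m+1) * (a - μ)^p := key2
    _ = (2*a)^(m+1) * (a + 1 - (μ+1))^p := by ring_nf

lemma stepdown (p m : ℕ) (h2 : m + 1 ≤ p) (hS : Sp p (m+1)) (hQ : Qp p m) :
    Sp p m := by
  unfold Sp Qp at *
  have hmR : (m:ℝ) + 1 ≤ p := by exact_mod_cast h2
  have hm0 : (0:ℝ) ≤ m := by positivity
  push_cast at hS
  set a := (p:ℝ)
  set μ := (m:ℝ)
  have ha0 : (0:ℝ) < a := by linarith
  have ham : (0:ℝ) < a - μ := by linarith
  have hS' : (a + μ + 1) ^ p ≤ (2*a)^(m+1) * (a - μ)^p := by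
    rw [show a + μ + 1 = a + (μ+1) from by ring, show a - μ = a + 1 - (μ+1) from by ring]
    exact hS
  have hpos : (0:ℝ) < 2*a*((a - μ) ^ p) := by positivity
  have key : ((a + μ) ^ p) * (2*a*((a - μ) ^ p))
      ≤ ((2*a)^m * (a + 1 - μ)^p) * (2*a*((a - μ) ^ p)) := by
    calc (a + μ) ^ p * (2*a*((a - μ) ^ p))
        = 2*a * ((a^2 - μ^2) ^ p) := by
          rw [show a^2 - μ^2 = (a+μ)*(a-μ) from by ring, mul_pow]; ring
      _ ≤ ((a+1)^2 - μ^2) ^ p := hQ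
      _ = (a + 1 - μ)^p * (a + μ + 1)^p := by
          rw [← mul_pow]; congr 1; ring
      _ ≤ (a + 1 - μ)^p * ((2*a)^(m+1) * (a - μ)^p) := by
          apply mul_le_mul_of_nonneg_left hS'
          apply pow_nonneg; linarith
      _ = ((2*a)^m * (a + 1 - μ)^p) * (2*a*((a - μ) ^ p)) := by
          rw [pow_succ]
          ring
  exact le_of_mul_le_mul_right key hpos

lemma upLemma (p : ℕ) (hp : 1 ≤ p) : ∀ m, 1 ≤ m → m ≤ p → (∀ j, 1 ≤ j → j < m → Rp p j) → Sp p m := by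
  intro m hm
  induction m, hm using Nat.le_induction with
  | base => intro _ _; exact base1 p hp
  | succ m hm ih =>
      intro hmp hR
      exact stepup p m hm hmp (ih (by omega) (fun j h1 h2 => hR j h1 (by omega))) (hR m hm (by omega))

lemma downLemma (p : ℕ) (hp : 1 ≤ p) : ∀ d, d < p → (∀ j, p - d ≤ j → j < p → Qp p j) → Sp p (p - d) := by
  intro d
  induction d with
  | zero => intro _ _; simpa using baseP p
  | succ d ih =>
      intro hd hQ
      have hS : Sp p (p - d) := ih (by omega) (fun j hj hjp => hQ j (by omega) hjp)
      have heq : p - d = (p - (d+1)) + 1 := by omega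
      rw [heq] at hS
      exact stepdown p (p - (d+1)) (by omega) hS (hQ (p - (d+1)) (by omega) (by omega))

lemma keyLemma (p m : ℕ) (hp : 1 ≤ p) (h1 : 1 ≤ m) (h2 : m ≤ p) : Sp p m := by
  by_cases hall : ∀ j, 1 ≤ j → j < m → Rp p j
  · exact upLemma p hp m h1 h2 hall
  · push_neg at hall
    obtain ⟨j₀, hj₀1, hj₀m, hj₀R⟩ := hall
    have hQ : ∀ j, m ≤ j → j < p → Qp p j := by
      intro j hj hjp
      by_contra hq
      have hRj : Rp p j := le_of_lt (lt_of_not_ge hq)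
      exact hj₀R (Rmono p j₀ j hp (by omega) (by omega) hRj)
    have := downLemma p hp (p - m) (by omega) (fun j hj hjp => hQ j (by omega) hjp)
    rwa [show p - (p - m) = m from by omega] at this

open Finset Real

set_option maxHeartbeats 2000000 in
/-- For `p ≥ 1` and `n = 2p`, and any integer partition `λ` of length `p`, the spherical
dimension for the complex Grassmannian
`A_n(λ) = [∏_{i,j=1}^p (λ_i+λ_j+n+1-i-j)/(n+1-i-j)]·[∏_{1≤i<j≤p} (λ_i-λ_j+j-i)/(j-i)]²`
satisfies `A_n(λ) ≤ n^{B_n(λ)}` with `B_n(λ) = (2/n)·∑_{i=1}^p (λ_i² + (n+1-2i)λ_i)`. -/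
theorem statement11 (p n : ℕ) (hp : 1 ≤ p) (hn : n = 2 * p) (lam : Fin p → ℕ)
    (hanti : Antitone lam) :
    (∏ i : Fin p, ∏ j : Fin p,
        (((lam i : ℝ) + (lam j : ℝ) +
            ((n : ℝ) + 1 - (((i : ℕ) : ℝ) + 1) - (((j : ℕ) : ℝ) + 1))) /
          ((n : ℝ) + 1 - (((i : ℕ) : ℝ) + 1) - (((j : ℕ) : ℝ) + 1)))) *
      (∏ i : Fin p, ∏ j ∈ Finset.Ioi i,
          (((lam i : ℝ) - (lam j : ℝ) + ((j : ℕ) : ℝ) - ((i : ℕ) : ℝ)) /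
            (((j : ℕ) : ℝ) - ((i : ℕ) : ℝ)))) ^ 2 ≤
      (n : ℝ) ^
        (2 / (n : ℝ) *
          ∑ i : Fin p,
            ((lam i : ℝ) ^ 2 +
              ((n : ℝ) + 1 - 2 * (((i : ℕ) : ℝ) + 1)) * (lam i : ℝ))) := by
  subst hn
  have hp0 : 0 < p := hp
  have hpR : (1:ℝ) ≤ (p:ℝ) := by exact_mod_cast hp
  have hIdx : ∀ i : Fin p, ((i:ℕ):ℝ) ≤ (p:ℝ) - 1 := by
    intro i
    have : ((i:ℕ):ℝ) + 1 ≤ (p:ℝ) := by exact_mod_cast i.isLt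
    linarith
  push_cast
  -- row telescoping for the first product
  have keyrow : ∀ i : Fin p, (∏ j : Fin p,
      ((2*(p:ℝ) - ((i:ℕ):ℝ) - ((j:ℕ):ℝ)) / (2*(p:ℝ) - 1 - ((i:ℕ):ℝ) - ((j:ℕ):ℝ))))
      = (2*(p:ℝ) - ((i:ℕ):ℝ))/((p:ℝ) - ((i:ℕ):ℝ)) := by
    intro i
    have hi := hIdx i
    have hstep : ∀ j : Fin p, ((2*(p:ℝ) - ((i:ℕ):ℝ) - ((j:ℕ):ℝ)) / (2*(p:ℝ) - 1 - ((i:ℕ):ℝ) - ((j:ℕ):ℝ)))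
        = (fun t : ℕ => (2*(p:ℝ) - ((i:ℕ):ℝ) - (t:ℝ)) / (2*(p:ℝ) - ((i:ℕ):ℝ) - ((t+1:ℕ):ℝ))) (j:ℕ) := by
      intro j; simp only; congr 1 <;> push_cast <;> ring
    rw [Finset.prod_congr rfl (fun j _ => hstep j),
        Fin.prod_univ_eq_prod_range (fun t => (2*(p:ℝ) - ((i:ℕ):ℝ) - (t:ℝ)) / (2*(p:ℝ) - ((i:ℕ):ℝ) - ((t+1:ℕ):ℝ))) p,
        tele_div (fun t => 2*(p:ℝ) - ((i:ℕ):ℝ) - (t:ℝ)) p]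
    · have hpc : ((p:ℕ):ℝ) = (p:ℝ) := rfl
      push_cast
      congr 1 <;> ring
    · intro t ht
      have htR : (t:ℝ) ≤ (p:ℝ) := by exact_mod_cast ht
      have : (0:ℝ) < 2*(p:ℝ) - ((i:ℕ):ℝ) - (t:ℝ) := by linarith
      linarith [this]
  -- Step 1 : Bernoulli bound on the first double product
  have claimP1 : (∏ i : Fin p, ∏ j : Fin p,
        (((lam i : ℝ) + (lam j : ℝ) +
            (2*(p:ℝ) + 1 - (((i:ℕ):ℝ) + 1) - (((j:ℕ):ℝ) + 1))) /
          (2*(p:ℝ) + 1 - (((i:ℕ):ℝ) + 1) - (((j:ℕ):ℝ) + 1))))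
      ≤ ∏ i : Fin p, ((2*(p:ℝ) - ((i:ℕ):ℝ))/((p:ℝ) - ((i:ℕ):ℝ)))^(2 * lam i) := by
    have step1 : (∏ i : Fin p, ∏ j : Fin p,
        (((lam i : ℝ) + (lam j : ℝ) +
            (2*(p:ℝ) + 1 - (((i:ℕ):ℝ) + 1) - (((j:ℕ):ℝ) + 1))) /
          (2*(p:ℝ) + 1 - (((i:ℕ):ℝ) + 1) - (((j:ℕ):ℝ) + 1))))
        ≤ ∏ i : Fin p, ∏ j : Fin p,
          ((2*(p:ℝ) - ((i:ℕ):ℝ) - ((j:ℕ):ℝ)) / (2*(p:ℝ) - 1 - ((i:ℕ):ℝ) - ((j:ℕ):ℝ)))^(lam i + lam j) := by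
      apply Finset.prod_le_prod
      · intro i _
        apply Finset.prod_nonneg
        intro j _
        have hi := hIdx i; have hj := hIdx j
        apply div_nonneg
        · have h1 : (0:ℝ) ≤ (lam i : ℝ) := Nat.cast_nonneg _
          have h2 : (0:ℝ) ≤ (lam j : ℝ) := Nat.cast_nonneg _
          linarith
        · linarith
      · intro i _
        apply Finset.prod_le_prod
        · intro j _
          have hi := hIdx i; have hj := hIdx j
          apply div_nonneg
          · have h1 : (0:ℝ) ≤ (lam i : ℝ) := Nat.cast_nonneg _
            have h2 : (0:ℝ) ≤ (lam j : ℝ) := Nat.cast_nonneg _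
            linarith
          · linarith
        · intro j _
          have hi := hIdx i; have hj := hIdx j
          have hd : (1:ℝ) ≤ 2*(p:ℝ) - 1 - ((i:ℕ):ℝ) - ((j:ℕ):ℝ) := by linarith
          calc ((lam i : ℝ) + (lam j : ℝ) +
                  (2*(p:ℝ) + 1 - (((i:ℕ):ℝ) + 1) - (((j:ℕ):ℝ) + 1))) /
                (2*(p:ℝ) + 1 - (((i:ℕ):ℝ) + 1) - (((j:ℕ):ℝ) + 1))
              = (((lam i + lam j : ℕ):ℝ) + (2*(p:ℝ) - 1 - ((i:ℕ):ℝ) - ((j:ℕ):ℝ)))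
                / (2*(p:ℝ) - 1 - ((i:ℕ):ℝ) - ((j:ℕ):ℝ)) := by
                congr 1 <;> push_cast <;> ring
            _ ≤ (((2*(p:ℝ) - 1 - ((i:ℕ):ℝ) - ((j:ℕ):ℝ)) + 1)/(2*(p:ℝ) - 1 - ((i:ℕ):ℝ) - ((j:ℕ):ℝ)))^(lam i + lam j) :=
                bern _ hd _
            _ = ((2*(p:ℝ) - ((i:ℕ):ℝ) - ((j:ℕ):ℝ)) / (2*(p:ℝ) - 1 - ((i:ℕ):ℝ) - ((j:ℕ):ℝ)))^(lam i + lam j) := by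
                congr 2
                ring
    refine step1.trans (le_of_eq ?_)
    have split : (∏ i : Fin p, ∏ j : Fin p,
          ((2*(p:ℝ) - ((i:ℕ):ℝ) - ((j:ℕ):ℝ)) / (2*(p:ℝ) - 1 - ((i:ℕ):ℝ) - ((j:ℕ):ℝ)))^(lam i + lam j))
        = (∏ i : Fin p, ∏ j : Fin p,
          ((2*(p:ℝ) - ((i:ℕ):ℝ) - ((j:ℕ):ℝ)) / (2*(p:ℝ) - 1 - ((i:ℕ):ℝ) - ((j:ℕ):ℝ)))^(lam i)) *
          (∏ i : Fin p, ∏ j : Fin p,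
          ((2*(p:ℝ) - ((i:ℕ):ℝ) - ((j:ℕ):ℝ)) / (2*(p:ℝ) - 1 - ((i:ℕ):ℝ) - ((j:ℕ):ℝ)))^(lam j)) := by
      simp only [pow_add, Finset.prod_mul_distrib]
    have swap : (∏ i : Fin p, ∏ j : Fin p,
          ((2*(p:ℝ) - ((i:ℕ):ℝ) - ((j:ℕ):ℝ)) / (2*(p:ℝ) - 1 - ((i:ℕ):ℝ) - ((j:ℕ):ℝ)))^(lam j))
        = (∏ i : Fin p, ∏ j : Fin p,
          ((2*(p:ℝ) - ((i:ℕ):ℝ) - ((j:ℕ):ℝ)) / (2*(p:ℝ) - 1 - ((i:ℕ):ℝ) - ((j:ℕ):ℝ)))^(lam i)) := by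
      rw [Finset.prod_comm]
      apply Finset.prod_congr rfl
      intro i _
      apply Finset.prod_congr rfl
      intro j _
      congr 2
      · ring
      · ring
    rw [split, swap, ← Finset.prod_mul_distrib]
    apply Finset.prod_congr rfl
    intro i _
    rw [Finset.prod_pow, keyrow i, ← pow_add]
    congr 1
    omega
  -- facts about Ioi membership
  have hmem : ∀ (i j : Fin p), j ∈ Finset.Ioi i → (i:ℕ) < (j:ℕ) := by
    intro i j hj
    have h2 : i < j := Finset.mem_Ioi.1 hj
    exact h2
  have hfac2 : ∀ (i j : Fin p), j ∈ Finset.Ioi i →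
      (0:ℝ) ≤ (((lam i : ℝ) - (lam j : ℝ) + ((j:ℕ):ℝ) - ((i:ℕ):ℝ)) / (((j:ℕ):ℝ) - ((i:ℕ):ℝ))) := by
    intro i j hj
    have hij := hmem i j hj
    have hijR : ((i:ℕ):ℝ) + 1 ≤ ((j:ℕ):ℝ) := by exact_mod_cast hij
    have hlam : lam j ≤ lam i := hanti (le_of_lt (Finset.mem_Ioi.1 hj))
    have hlamR : (lam j : ℝ) ≤ (lam i : ℝ) := by exact_mod_cast hlam
    apply div_nonneg <;> linarith
  have hP2nonneg : (0:ℝ) ≤ ∏ i : Fin p, ∏ j ∈ Finset.Ioi i,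
      (((lam i : ℝ) - (lam j : ℝ) + ((j:ℕ):ℝ) - ((i:ℕ):ℝ)) / (((j:ℕ):ℝ) - ((i:ℕ):ℝ))) := by
    apply Finset.prod_nonneg
    intro i _
    exact Finset.prod_nonneg (fun j hj => hfac2 i j hj)
  -- inner telescoping over Ioi
  have innerIoi : ∀ i : Fin p, (∏ j ∈ Finset.Ioi i,
      ((((j:ℕ):ℝ) - ((i:ℕ):ℝ) + 1) / (((j:ℕ):ℝ) - ((i:ℕ):ℝ)))) = (p:ℝ) - ((i:ℕ):ℝ) := by
    intro i
    have hi1 : (i:ℕ) + 1 ≤ p := i.isLt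
    rw [prod_Ioi_val i (fun t => (((t:ℕ):ℝ) - ((i:ℕ):ℝ) + 1) / (((t:ℕ):ℝ) - ((i:ℕ):ℝ)))]
    have hstep : ∀ t ∈ Finset.range (p - ((i:ℕ)+1)),
        ((((i:ℕ) + 1 + t : ℕ):ℝ) - ((i:ℕ):ℝ) + 1) / ((((i:ℕ) + 1 + t : ℕ):ℝ) - ((i:ℕ):ℝ))
        = (fun s : ℕ => ((s:ℝ)+1)) (t+1) / (fun s : ℕ => ((s:ℝ)+1)) t := by
      intro t _
      simp only
      congr 1 <;> push_cast <;> ring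
    rw [Finset.prod_congr rfl hstep, tele_div' (fun s : ℕ => ((s:ℝ)+1)) _ ?_]
    · have : ((p - ((i:ℕ)+1) : ℕ):ℝ) = (p:ℝ) - ((i:ℕ):ℝ) - 1 := by
        push_cast [Nat.cast_sub hi1]
        ring
      rw [this]
      push_cast
      ring
    · intro t _
      intro hc
      have : (0:ℝ) < (t:ℝ) + 1 := by positivity
      linarith
  -- inner telescoping over Iio
  have innerIio : ∀ j : Fin p, (∏ i ∈ Finset.Iio j,
      ((((j:ℕ):ℝ) - ((i:ℕ):ℝ) + 1) / (((j:ℕ):ℝ) - ((i:ℕ):ℝ)))) = ((j:ℕ):ℝ) + 1 := by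
    intro j
    rw [prod_Iio_val j (fun t => (((j:ℕ):ℝ) - ((t:ℕ):ℝ) + 1) / (((j:ℕ):ℝ) - ((t:ℕ):ℝ)))]
    have hstep : ∀ t ∈ Finset.range (j:ℕ),
        (((j:ℕ):ℝ) - ((t:ℕ):ℝ) + 1) / (((j:ℕ):ℝ) - ((t:ℕ):ℝ))
        = (fun s : ℕ => ((j:ℕ):ℝ) - (s:ℝ) + 1) t / (fun s : ℕ => ((j:ℕ):ℝ) - (s:ℝ) + 1) (t+1) := by
      intro t _
      simp only
      congr 1 <;> push_cast <;> ring
    rw [Finset.prod_congr rfl hstep, tele_div (fun s : ℕ => ((j:ℕ):ℝ) - (s:ℝ) + 1) _ ?_]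
    · norm_num
    · intro t ht
      intro hc
      have htR : (t:ℝ) ≤ ((j:ℕ):ℝ) := by exact_mod_cast ht
      linarith
  -- claim P2
  have claimP2 : (∏ i : Fin p, ∏ j ∈ Finset.Ioi i,
      (((lam i : ℝ) - (lam j : ℝ) + ((j:ℕ):ℝ) - ((i:ℕ):ℝ)) / (((j:ℕ):ℝ) - ((i:ℕ):ℝ))))
      ≤ ∏ i : Fin p, (((p:ℝ) - ((i:ℕ):ℝ))/(((i:ℕ):ℝ) + 1))^(lam i) := by
    have step1 : (∏ i : Fin p, ∏ j ∈ Finset.Ioi i,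
        (((lam i : ℝ) - (lam j : ℝ) + ((j:ℕ):ℝ) - ((i:ℕ):ℝ)) / (((j:ℕ):ℝ) - ((i:ℕ):ℝ))))
        ≤ ∏ i : Fin p, ∏ j ∈ Finset.Ioi i,
          ((((j:ℕ):ℝ) - ((i:ℕ):ℝ) + 1) / (((j:ℕ):ℝ) - ((i:ℕ):ℝ)))^(lam i - lam j) := by
      apply Finset.prod_le_prod
      · intro i _
        exact Finset.prod_nonneg (fun j hj => hfac2 i j hj)
      · intro i _
        apply Finset.prod_le_prod
        · intro j hj
          exact hfac2 i j hj
        · intro j hj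
          have hij := hmem i j hj
          have hijR : ((i:ℕ):ℝ) + 1 ≤ ((j:ℕ):ℝ) := by exact_mod_cast hij
          have hlam : lam j ≤ lam i := hanti (le_of_lt (Finset.mem_Ioi.1 hj))
          have hd : (1:ℝ) ≤ ((j:ℕ):ℝ) - ((i:ℕ):ℝ) := by linarith
          calc ((lam i : ℝ) - (lam j : ℝ) + ((j:ℕ):ℝ) - ((i:ℕ):ℝ)) / (((j:ℕ):ℝ) - ((i:ℕ):ℝ))
              = (((lam i - lam j : ℕ):ℝ) + (((j:ℕ):ℝ) - ((i:ℕ):ℝ))) / (((j:ℕ):ℝ) - ((i:ℕ):ℝ)) := by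
                congr 1
                push_cast [Nat.cast_sub hlam]
                ring
            _ ≤ (((((j:ℕ):ℝ) - ((i:ℕ):ℝ)) + 1)/(((j:ℕ):ℝ) - ((i:ℕ):ℝ)))^(lam i - lam j) := bern _ hd _
            _ = ((((j:ℕ):ℝ) - ((i:ℕ):ℝ) + 1) / (((j:ℕ):ℝ) - ((i:ℕ):ℝ)))^(lam i - lam j) := by
                congr 2
    refine step1.trans (le_of_eq ?_)
    have split : ∀ (i j : Fin p), j ∈ Finset.Ioi i →
        ((((j:ℕ):ℝ) - ((i:ℕ):ℝ) + 1) / (((j:ℕ):ℝ) - ((i:ℕ):ℝ)))^(lam i - lam j)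
        = ((((j:ℕ):ℝ) - ((i:ℕ):ℝ) + 1) / (((j:ℕ):ℝ) - ((i:ℕ):ℝ)))^(lam i) *
          (((((j:ℕ):ℝ) - ((i:ℕ):ℝ) + 1) / (((j:ℕ):ℝ) - ((i:ℕ):ℝ)))^(lam j))⁻¹ := by
      intro i j hj
      have hij := hmem i j hj
      have hijR : ((i:ℕ):ℝ) + 1 ≤ ((j:ℕ):ℝ) := by exact_mod_cast hij
      have hlam : lam j ≤ lam i := hanti (le_of_lt (Finset.mem_Ioi.1 hj))
      have hB0 : ((((j:ℕ):ℝ) - ((i:ℕ):ℝ) + 1) / (((j:ℕ):ℝ) - ((i:ℕ):ℝ))) ≠ 0 := by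
        apply div_ne_zero <;> · intro hc; nlinarith [hc]
      exact pow_sub₀ _ hB0 hlam
    rw [Finset.prod_congr rfl (fun i _ => Finset.prod_congr rfl (fun j hj => split i j hj))]
    simp only [Finset.prod_mul_distrib, Finset.prod_inv_distrib]
    have numer : (∏ i : Fin p, ∏ j ∈ Finset.Ioi i,
        ((((j:ℕ):ℝ) - ((i:ℕ):ℝ) + 1) / (((j:ℕ):ℝ) - ((i:ℕ):ℝ)))^(lam i))
        = ∏ i : Fin p, ((p:ℝ) - ((i:ℕ):ℝ))^(lam i) := by
      apply Finset.prod_congr rfl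
      intro i _
      rw [Finset.prod_pow, innerIoi i]
    have denom : (∏ i : Fin p, ∏ j ∈ Finset.Ioi i,
        ((((j:ℕ):ℝ) - ((i:ℕ):ℝ) + 1) / (((j:ℕ):ℝ) - ((i:ℕ):ℝ)))^(lam j))
        = ∏ j : Fin p, (((j:ℕ):ℝ) + 1)^(lam j) := by
      rw [Finset.prod_comm' (t' := Finset.univ) (s' := fun j => Finset.Iio j) ?_]
      · apply Finset.prod_congr rfl
        intro j _
        rw [Finset.prod_pow, innerIio j]
      · intro i j
        simp [Finset.mem_Ioi, Finset.mem_Iio]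
    rw [numer, denom, ← Finset.prod_inv_distrib, ← Finset.prod_mul_distrib]
    apply Finset.prod_congr rfl
    intro i _
    rw [div_pow, div_eq_mul_inv]
  -- combine the two bounds into a single product
  have combine : (∏ i : Fin p, ((2*(p:ℝ) - ((i:ℕ):ℝ))/((p:ℝ) - ((i:ℕ):ℝ)))^(2 * lam i)) *
      (∏ i : Fin p, (((p:ℝ) - ((i:ℕ):ℝ))/(((i:ℕ):ℝ) + 1))^(lam i))^2
      = ∏ i : Fin p, ((2*(p:ℝ) - ((i:ℕ):ℝ))/(((i:ℕ):ℝ) + 1))^(2 * lam i) := by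
    rw [← Finset.prod_pow, ← Finset.prod_mul_distrib]
    apply Finset.prod_congr rfl
    intro i _
    have hi := hIdx i
    have hpi : (p:ℝ) - ((i:ℕ):ℝ) ≠ 0 := by intro hc; linarith
    have hi1 : ((i:ℕ):ℝ) + 1 ≠ 0 := by positivity
    rw [← pow_mul, mul_comm (lam i) 2, ← mul_pow]
    congr 1
    field_simp
  -- per-index comparison with the rpow bound
  have claim5 : ∀ i : Fin p, ((2*(p:ℝ) - ((i:ℕ):ℝ))/(((i:ℕ):ℝ) + 1))^(2 * lam i)
      ≤ (2*(p:ℝ)) ^ (2 / (2*(p:ℝ)) *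
          ((lam i:ℝ)^2 + (2*(p:ℝ) + 1 - 2*(((i:ℕ):ℝ) + 1)) * (lam i:ℝ))) := by
    intro i
    have hk : (i:ℕ) < p := i.isLt
    have hkR : ((i:ℕ):ℝ) ≤ (p:ℝ) - 1 := hIdx i
    have h2p1 : (1:ℝ) ≤ 2*(p:ℝ) := by linarith
    have h2p0 : (0:ℝ) < 2*(p:ℝ) := by linarith
    have hm1 : 1 ≤ p - (i:ℕ) := by omega
    have hmp : p - (i:ℕ) ≤ p := by omega
    have hcast : ((p - (i:ℕ) : ℕ):ℝ) = (p:ℝ) - ((i:ℕ):ℝ) := by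
      rw [Nat.cast_sub (le_of_lt hk)]
    have key := keyLemma p (p - (i:ℕ)) hp hm1 hmp
    unfold Sp at key
    rw [hcast] at key
    have key2 : (2*(p:ℝ) - ((i:ℕ):ℝ))^p ≤ (2*(p:ℝ))^(p - (i:ℕ)) * (((i:ℕ):ℝ) + 1)^p := by
      calc (2*(p:ℝ) - ((i:ℕ):ℝ))^p = ((p:ℝ) + ((p:ℝ) - ((i:ℕ):ℝ)))^p := by congr 1; ring
        _ ≤ (2*(p:ℝ))^(p - (i:ℕ)) * ((p:ℝ) + 1 - ((p:ℝ) - ((i:ℕ):ℝ)))^p := key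
        _ = (2*(p:ℝ))^(p - (i:ℕ)) * (((i:ℕ):ℝ) + 1)^p := by
            congr 2
            ring
    have hXp : ((2*(p:ℝ) - ((i:ℕ):ℝ))/(((i:ℕ):ℝ)+1))^p ≤ (2*(p:ℝ))^(p - (i:ℕ)) := by
      rw [div_pow, div_le_iff₀ (by positivity)]
      exact key2
    have hX0 : (0:ℝ) ≤ (2*(p:ℝ) - ((i:ℕ):ℝ))/(((i:ℕ):ℝ)+1) := by
      apply div_nonneg
      · linarith
      · positivity
    have hstepB : ((2*(p:ℝ) - ((i:ℕ):ℝ))/(((i:ℕ):ℝ)+1))^(2 * lam i)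
        ≤ (2*(p:ℝ)) ^ (((2 * lam i * (p - (i:ℕ)) : ℕ):ℝ)/(p:ℝ)) := by
      apply le_of_pow_le_pow_left₀ (n := p) (by omega) (Real.rpow_nonneg (le_of_lt h2p0) _)
      have hrhs : ((2*(p:ℝ)) ^ (((2 * lam i * (p - (i:ℕ)) : ℕ):ℝ)/(p:ℝ)))^p
          = (2*(p:ℝ))^(2 * lam i * (p - (i:ℕ))) := by
        rw [← Real.rpow_natCast ((2*(p:ℝ)) ^ (((2 * lam i * (p - (i:ℕ)) : ℕ):ℝ)/(p:ℝ))) p,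
            ← Real.rpow_mul (le_of_lt h2p0)]
        rw [show ((2 * lam i * (p - (i:ℕ)) : ℕ):ℝ)/(p:ℝ) * ((p:ℕ):ℝ)
            = ((2 * lam i * (p - (i:ℕ)) : ℕ):ℝ) from by
          field_simp]
        rw [Real.rpow_natCast]
      rw [hrhs]
      calc (((2*(p:ℝ) - ((i:ℕ):ℝ))/(((i:ℕ):ℝ)+1))^(2 * lam i))^p
          = (((2*(p:ℝ) - ((i:ℕ):ℝ))/(((i:ℕ):ℝ)+1))^p)^(2 * lam i) := by
            rw [← pow_mul, ← pow_mul, mul_comm (2 * lam i) p]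
        _ ≤ ((2*(p:ℝ))^(p - (i:ℕ)))^(2 * lam i) := pow_le_pow_left₀ (pow_nonneg hX0 p) hXp _
        _ = (2*(p:ℝ))^(2 * lam i * (p - (i:ℕ))) := by
            rw [← pow_mul]
            congr 1
            ring
    refine hstepB.trans ?_
    apply Real.rpow_le_rpow_of_exponent_le h2p1
    have hEc : ((2 * lam i * (p - (i:ℕ)) : ℕ):ℝ) = 2 * (lam i:ℝ) * ((p:ℝ) - ((i:ℕ):ℝ)) := by
      push_cast [Nat.cast_sub (le_of_lt hk)]
      ring
    have hLL : (lam i:ℝ) ≤ (lam i:ℝ)^2 := by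
      have h1 : lam i ≤ lam i^2 := Nat.le_self_pow two_ne_zero _
      exact_mod_cast h1
    rw [hEc, div_le_iff₀ (by linarith : (0:ℝ) < (p:ℝ))]
    have hexp : 2 / (2*(p:ℝ)) * ((lam i:ℝ)^2 + (2*(p:ℝ) + 1 - 2*(((i:ℕ):ℝ) + 1)) * (lam i:ℝ)) * (p:ℝ)
        = (lam i:ℝ)^2 + (2*(p:ℝ) - 1 - 2*((i:ℕ):ℝ)) * (lam i:ℝ) := by
      field_simp
      ring
    rw [hexp]
    nlinarith [(Nat.cast_nonneg (lam i) : (0:ℝ) ≤ (lam i:ℝ)), hLL]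
  -- final assembly
  have Q1nonneg : (0:ℝ) ≤ ∏ i : Fin p, ((2*(p:ℝ) - ((i:ℕ):ℝ))/((p:ℝ) - ((i:ℕ):ℝ)))^(2 * lam i) := by
    apply Finset.prod_nonneg
    intro i _
    have hi := hIdx i
    apply pow_nonneg
    apply div_nonneg <;> linarith
  calc (∏ i : Fin p, ∏ j : Fin p,
        (((lam i : ℝ) + (lam j : ℝ) +
            (2*(p:ℝ) + 1 - (((i:ℕ):ℝ) + 1) - (((j:ℕ):ℝ) + 1))) /
          (2*(p:ℝ) + 1 - (((i:ℕ):ℝ) + 1) - (((j:ℕ):ℝ) + 1)))) *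
      (∏ i : Fin p, ∏ j ∈ Finset.Ioi i,
          (((lam i : ℝ) - (lam j : ℝ) + ((j:ℕ):ℝ) - ((i:ℕ):ℝ)) /
            (((j:ℕ):ℝ) - ((i:ℕ):ℝ)))) ^ 2
      ≤ (∏ i : Fin p, ((2*(p:ℝ) - ((i:ℕ):ℝ))/((p:ℝ) - ((i:ℕ):ℝ)))^(2 * lam i)) *
        (∏ i : Fin p, (((p:ℝ) - ((i:ℕ):ℝ))/(((i:ℕ):ℝ) + 1))^(lam i))^2 :=
      mul_le_mul claimP1 (pow_le_pow_left₀ hP2nonneg claimP2 2) (pow_nonneg hP2nonneg 2) Q1nonneg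
    _ = ∏ i : Fin p, ((2*(p:ℝ) - ((i:ℕ):ℝ))/(((i:ℕ):ℝ) + 1))^(2 * lam i) := combine
    _ ≤ ∏ i : Fin p, (2*(p:ℝ)) ^ (2 / (2*(p:ℝ)) *
          ((lam i:ℝ)^2 + (2*(p:ℝ) + 1 - 2*(((i:ℕ):ℝ) + 1)) * (lam i:ℝ))) := by
        apply Finset.prod_le_prod
        · intro i _
          have hi := hIdx i
          apply pow_nonneg
          apply div_nonneg
          · linarith
          · positivity
        · intro i _
          exact claim5 i
    _ = (2*(p:ℝ)) ^ (∑ i : Fin p, 2 / (2*(p:ℝ)) *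
          ((lam i:ℝ)^2 + (2*(p:ℝ) + 1 - 2*(((i:ℕ):ℝ) + 1)) * (lam i:ℝ))) := by
        rw [rpow_sum' Finset.univ (2*(p:ℝ)) (by linarith) _]
    _ = (2*(p:ℝ)) ^ (2 / (2*(p:ℝ)) * ∑ i : Fin p,
          ((lam i:ℝ)^2 + (2*(p:ℝ) + 1 - 2*(((i:ℕ):ℝ) + 1)) * (lam i:ℝ))) := by
        rw [Finset.mul_sum]
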